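/- arXiv:1507.02592 — 6 statements merged into one kernel-verified Lean document; each statement's English description precedes it below -/
import Mathlib

section
/- For any bounded random variable X taking values in [-a,a], with κ(x) = (e^x - x - 1)/x² (extended by κ(0)=1/2), we have κ(-2a)·Var(X) ≤ E[X] + log E[e^{-X}] ≤ κ(2a)·Var(X). -/
open MeasureTheory Real

noncomputable def kappa (x : ℝ) : ℝ :=
  if x = 0 then 1/2 else (Real.exp x - x - 1) / x ^ 2

noncomputable def II {Ω : Type*} [MeasurableSpace Ω] (μ : Measure Ω) (X : Ω → ℝ)
    (k : ℕ) (t : ℝ) : ℝ := ∫ ω, (X ω)^k * Real.exp (-(t * X ω)) ∂μ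

section
variable {Ω : Type*} [MeasurableSpace Ω] {μ : Measure Ω} [IsProbabilityMeasure μ]
  {X : Ω → ℝ} {a : ℝ}

lemma norm_bd {x : ℝ} (h : |x| ≤ a) (k : ℕ) {b t : ℝ} (hbt : |t| ≤ b) :
    ‖x^k * Real.exp (-(t * x))‖ ≤ a^k * Real.exp (b*a) := by
  rw [norm_mul, norm_pow, Real.norm_eq_abs, Real.norm_eq_abs, Real.abs_exp]
  have h1 : |x|^k ≤ a^k := pow_le_pow_left₀ (abs_nonneg _) h k
  have h2 : Real.exp (-(t * x)) ≤ Real.exp (b*a) := by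
    apply Real.exp_le_exp.2
    calc -(t * x) ≤ |t * x| := neg_le_abs _
      _ = |t| * |x| := abs_mul _ _
      _ ≤ b * a := mul_le_mul hbt h (abs_nonneg _) (le_trans (abs_nonneg _) hbt)
  exact mul_le_mul h1 h2 (Real.exp_pos _).le
    (pow_nonneg (le_trans (abs_nonneg _) h) _)

lemma aux_meas (hX : Measurable X) (k : ℕ) (t : ℝ) :
    AEStronglyMeasurable (fun ω => (X ω)^k * Real.exp (-(t * X ω))) μ :=
  ((hX.pow_const k).mul ((hX.const_mul t).neg.exp)).aestronglyMeasurable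

lemma aux_int (hX : Measurable X) (hbound : ∀ᵐ ω ∂μ, |X ω| ≤ a) (k : ℕ) {b t : ℝ}
    (hbt : |t| ≤ b) :
    Integrable (fun ω => (X ω)^k * Real.exp (-(t * X ω))) μ := by
  apply Integrable.mono' (integrable_const (a^k * Real.exp (b*a))) (aux_meas hX k t)
  filter_upwards [hbound] with ω h
  exact norm_bd h k hbt

lemma aux_int' (hX : Measurable X) (hbound : ∀ᵐ ω ∂μ, |X ω| ≤ a) (k : ℕ) (t : ℝ) :
    Integrable (fun ω => (X ω)^k * Real.exp (-(t * X ω))) μ :=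
  aux_int hX hbound k (le_refl |t|)

lemma aux_deriv (hX : Measurable X) (hbound : ∀ᵐ ω ∂μ, |X ω| ≤ a) (k : ℕ) (t₀ : ℝ) :
    HasDerivAt (fun t => ∫ ω, (X ω)^k * Real.exp (-(t * X ω)) ∂μ)
      (∫ ω, -((X ω)^(k+1) * Real.exp (-(t₀ * X ω))) ∂μ) t₀ := by
  have key := hasDerivAt_integral_of_dominated_loc_of_deriv_le
    (F := fun t ω => (X ω)^k * Real.exp (-(t * X ω)))
    (F' := fun t ω => -((X ω)^(k+1) * Real.exp (-(t * X ω))))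
    (x₀ := t₀) (bound := fun _ => a^(k+1) * Real.exp ((|t₀|+1)*a)) (s := Metric.ball t₀ 1)
    (Metric.ball_mem_nhds t₀ zero_lt_one)
    (Filter.Eventually.of_forall (fun t => aux_meas hX k t))
    (aux_int' hX hbound k t₀)
    ((aux_meas hX (k+1) t₀).neg)
    ?_ (integrable_const _) ?_
  · exact key.2
  · filter_upwards [hbound] with ω h t ht
    rw [norm_neg]
    apply norm_bd h (k+1)
    have := Metric.mem_ball.1 ht
    rw [Real.dist_eq] at this
    calc |t| = |t₀ + (t - t₀)| := by ring_nf
      _ ≤ |t₀| + |t - t₀| := abs_add_le _ _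
      _ ≤ |t₀| + 1 := by linarith [this.le]
  · apply Filter.Eventually.of_forall
    intro ω t _
    have h1 : HasDerivAt (fun x => -(x * X ω)) (-(X ω)) t :=
      (hasDerivAt_mul_const (X ω)).neg
    have h3 := h1.exp.const_mul ((X ω)^k)
    refine h3.congr_deriv ?_
    ring

lemma II_deriv (hX : Measurable X) (hbound : ∀ᵐ ω ∂μ, |X ω| ≤ a) (k : ℕ) (t : ℝ) :
    HasDerivAt (II μ X k) (-(II μ X (k+1) t)) t := by
  have := aux_deriv hX hbound k t
  rw [integral_neg] at this
  exact this

lemma II_cont (hX : Measurable X) (hbound : ∀ᵐ ω ∂μ, |X ω| ≤ a) (k : ℕ) :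
    Continuous (II μ X k) := by
  have : Differentiable ℝ (II μ X k) :=
    fun t => (II_deriv hX hbound k t).differentiableAt
  exact this.continuous

lemma II_zero_zero : II μ X 0 0 = 1 := by
  simp [II]

lemma II_zero_ge (hX : Measurable X) (hbound : ∀ᵐ ω ∂μ, |X ω| ≤ a) (t : ℝ)
    (ht : 0 ≤ t) : Real.exp (-(t*a)) ≤ II μ X 0 t := by
  have h := integral_mono_ae (integrable_const (Real.exp (-(t*a))))
    (aux_int' hX hbound 0 t) ?_
  · simpa [II] using h
  · filter_upwards [hbound] with ω h
    simp only [pow_zero, one_mul]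
    apply Real.exp_le_exp.2
    have : t * X ω ≤ t * a ∨ True := Or.inr trivial
    nlinarith [abs_le.1 h]

lemma II_zero_le (hX : Measurable X) (hbound : ∀ᵐ ω ∂μ, |X ω| ≤ a) (t : ℝ)
    (ht : 0 ≤ t) : II μ X 0 t ≤ Real.exp (t*a) := by
  have h := integral_mono_ae (aux_int' hX hbound 0 t)
    (integrable_const (Real.exp (t*a))) ?_
  · simpa [II] using h
  · filter_upwards [hbound] with ω h
    simp only [pow_zero, one_mul]
    apply Real.exp_le_exp.2
    nlinarith [abs_le.1 h]

lemma II_zero_pos (hX : Measurable X) (hbound : ∀ᵐ ω ∂μ, |X ω| ≤ a) (t : ℝ) :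
    0 < II μ X 0 t := by
  have h := integral_mono_ae (integrable_const (Real.exp (-(abs t * a))))
    (aux_int' hX hbound 0 t) ?_
  · have := (Real.exp_pos (-(abs t * a)))
    simp only [integral_const, measure_univ, ENNReal.toReal_one, probReal_univ, smul_eq_mul,
      one_mul] at h
    exact lt_of_lt_of_le this h
  · filter_upwards [hbound] with ω h
    simp only [pow_zero, one_mul]
    apply Real.exp_le_exp.2
    have h1 := abs_le.1 h
    have h2 := neg_abs_le t
    have h3 := le_abs_self t
    nlinarith [abs_nonneg t, le_trans (abs_nonneg (X ω)) h]


lemma J_int (hX : Measurable X) (hbound : ∀ᵐ ω ∂μ, |X ω| ≤ a) (c t : ℝ) :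
    Integrable (fun ω => (X ω - c)^2 * Real.exp (-(t * X ω))) μ := by
  have h : (fun ω => (X ω - c)^2 * Real.exp (-(t * X ω))) =
      (fun ω => ((X ω)^2 * Real.exp (-(t * X ω)) -
        (2*c) * ((X ω)^1 * Real.exp (-(t * X ω)))) +
        c^2 * ((X ω)^0 * Real.exp (-(t * X ω)))) := by
    funext ω; ring
  rw [h]
  exact ((aux_int' hX hbound 2 t).sub ((aux_int' hX hbound 1 t).const_mul (2*c))).add
    ((aux_int' hX hbound 0 t).const_mul (c^2))

lemma J_eq (hX : Measurable X) (hbound : ∀ᵐ ω ∂μ, |X ω| ≤ a) (c t : ℝ) :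
    ∫ ω, (X ω - c)^2 * Real.exp (-(t * X ω)) ∂μ =
      II μ X 2 t - 2*c*(II μ X 1 t) + c^2 * (II μ X 0 t) := by
  have h : (fun ω => (X ω - c)^2 * Real.exp (-(t * X ω))) =
      (fun ω => ((X ω)^2 * Real.exp (-(t * X ω)) -
        (2*c) * ((X ω)^1 * Real.exp (-(t * X ω)))) +
        c^2 * ((X ω)^0 * Real.exp (-(t * X ω)))) := by
    funext ω; ring
  have i2 := aux_int' hX hbound 2 t
  have i1 := (aux_int' hX hbound 1 t).const_mul (2*c)
  have i0 := (aux_int' hX hbound 0 t).const_mul (c^2)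
  have isub : Integrable (fun ω => (X ω)^2 * Real.exp (-(t * X ω)) -
      (2*c) * ((X ω)^1 * Real.exp (-(t * X ω)))) μ := i2.sub i1
  rw [h, integral_add isub i0, integral_sub i2 i1, integral_const_mul, integral_const_mul]
  rfl

lemma J_nonneg (c t : ℝ) :
    0 ≤ ∫ ω, (X ω - c)^2 * Real.exp (-(t * X ω)) ∂μ :=
  integral_nonneg (fun ω => mul_nonneg (sq_nonneg _) (Real.exp_pos _).le)

/-- abbreviations: m = E X, V = Var X -/
lemma var_eq (hX : Measurable X) (hbound : ∀ᵐ ω ∂μ, |X ω| ≤ a) (c : ℝ) :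
    ∫ ω, (X ω - c)^2 * Real.exp (-((0:ℝ) * X ω)) ∂μ =
      (II μ X 2 0 - (II μ X 1 0)^2) + (c - II μ X 1 0)^2 := by
  rw [J_eq hX hbound c 0, II_zero_zero]
  ring

lemma V_nonneg (hX : Measurable X) (hbound : ∀ᵐ ω ∂μ, |X ω| ≤ a) :
    0 ≤ II μ X 2 0 - (II μ X 1 0)^2 := by
  have := J_nonneg (μ := μ) (X := X) (II μ X 1 0) 0
  rw [var_eq hX hbound] at this
  simpa using this

/-- tilted second moment bounds -/
lemma J_ge (hX : Measurable X) (hbound : ∀ᵐ ω ∂μ, |X ω| ≤ a) (c t : ℝ) (ht : 0 ≤ t) :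
    Real.exp (-(t*a)) * ((II μ X 2 0 - (II μ X 1 0)^2) + (c - II μ X 1 0)^2) ≤
      ∫ ω, (X ω - c)^2 * Real.exp (-(t * X ω)) ∂μ := by
  rw [← var_eq hX hbound c, ← integral_const_mul]
  apply integral_mono_ae ((J_int hX hbound c 0).const_mul _) (J_int hX hbound c t)
  filter_upwards [hbound] with ω h
  have h2 : Real.exp (-(t*a)) ≤ Real.exp (-(t * X ω)) := by
    apply Real.exp_le_exp.2
    nlinarith [abs_le.1 h]
  calc Real.exp (-(t*a)) * ((X ω - c)^2 * Real.exp (-((0:ℝ) * X ω)))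
      = Real.exp (-(t*a)) * (X ω - c)^2 := by norm_num
    _ ≤ Real.exp (-(t * X ω)) * (X ω - c)^2 :=
        mul_le_mul_of_nonneg_right h2 (sq_nonneg _)
    _ = (X ω - c)^2 * Real.exp (-(t * X ω)) := by ring

lemma J_le (hX : Measurable X) (hbound : ∀ᵐ ω ∂μ, |X ω| ≤ a) (c t : ℝ) (ht : 0 ≤ t) :
    ∫ ω, (X ω - c)^2 * Real.exp (-(t * X ω)) ∂μ ≤
      Real.exp (t*a) * ((II μ X 2 0 - (II μ X 1 0)^2) + (c - II μ X 1 0)^2) := by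
  rw [← var_eq hX hbound c, ← integral_const_mul]
  apply integral_mono_ae (J_int hX hbound c t) ((J_int hX hbound c 0).const_mul _)
  filter_upwards [hbound] with ω h
  have h2 : Real.exp (-(t * X ω)) ≤ Real.exp (t*a) := by
    apply Real.exp_le_exp.2
    nlinarith [abs_le.1 h]
  calc (X ω - c)^2 * Real.exp (-(t * X ω))
      ≤ (X ω - c)^2 * Real.exp (t*a) := by
        exact mul_le_mul_of_nonneg_left h2 (sq_nonneg _)
    _ = Real.exp (t*a) * ((X ω - c)^2 * Real.exp (-((0:ℝ) * X ω))) := by norm_num; ring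


lemma psi2_lb (hX : Measurable X) (hbound : ∀ᵐ ω ∂μ, |X ω| ≤ a) (t : ℝ) (ht : 0 ≤ t) :
    Real.exp (-(2*t*a)) * (II μ X 2 0 - (II μ X 1 0)^2) ≤
      (II μ X 2 t * II μ X 0 t - (II μ X 1 t)^2) / (II μ X 0 t)^2 := by
  set V := II μ X 2 0 - (II μ X 1 0)^2 with hV
  set F := II μ X 0 t with hFdef
  have pos : 0 < F := II_zero_pos hX hbound t
  have hVnn : 0 ≤ V := V_nonneg hX hbound
  have hFle : F ≤ Real.exp (t*a) := II_zero_le hX hbound t ht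
  set I1 := II μ X 1 t with hI1
  set m := II μ X 1 0 with hm
  have key : Real.exp (-(t*a)) * V ≤ II μ X 2 t - I1^2/F := by
    have h1 := J_ge hX hbound (I1 / F) t ht
    rw [J_eq hX hbound] at h1
    have h2 : II μ X 2 t - 2*(I1/F)*I1 + (I1/F)^2 * F = II μ X 2 t - I1^2/F := by
      field_simp; ring
    rw [h2] at h1
    nlinarith [sq_nonneg (I1/F - m), Real.exp_pos (-(t*a))]
  have key2 : Real.exp (-(t*a)) * V * F ≤ II μ X 2 t * F - I1^2 := by
    have h3 := mul_le_mul_of_nonneg_right key pos.le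
    have h4 : (II μ X 2 t - I1^2/F) * F = II μ X 2 t * F - I1^2 := by
      field_simp
    linarith [h3.trans_eq h4]
  rw [le_div_iff₀ (pow_pos pos 2)]
  have e1 : Real.exp (-(2*t*a)) * Real.exp (t*a) = Real.exp (-(t*a)) := by
    rw [← Real.exp_add]; congr 1; ring
  calc Real.exp (-(2*t*a)) * V * F^2 = (Real.exp (-(2*t*a)) * V * F) * F := by ring
    _ ≤ (Real.exp (-(2*t*a)) * V * Real.exp (t*a)) * F := by
        apply mul_le_mul_of_nonneg_right _ pos.le
        exact mul_le_mul_of_nonneg_left hFle (mul_nonneg (Real.exp_pos _).le hVnn)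
    _ = Real.exp (-(t*a)) * V * F := by rw [show Real.exp (-(2*t*a)) * V * Real.exp (t*a)
          = Real.exp (-(2*t*a)) * Real.exp (t*a) * V from by ring, e1]
    _ ≤ II μ X 2 t * F - I1^2 := key2

lemma psi2_ub (hX : Measurable X) (hbound : ∀ᵐ ω ∂μ, |X ω| ≤ a) (t : ℝ) (ht : 0 ≤ t) :
    (II μ X 2 t * II μ X 0 t - (II μ X 1 t)^2) / (II μ X 0 t)^2 ≤
      Real.exp (2*t*a) * (II μ X 2 0 - (II μ X 1 0)^2) := by
  set V := II μ X 2 0 - (II μ X 1 0)^2 with hV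
  set F := II μ X 0 t with hFdef
  have pos : 0 < F := II_zero_pos hX hbound t
  have hVnn : 0 ≤ V := V_nonneg hX hbound
  have hFge : Real.exp (-(t*a)) ≤ F := II_zero_ge hX hbound t ht
  set I1 := II μ X 1 t with hI1
  set m := II μ X 1 0 with hm
  have hmin : II μ X 2 t - I1^2/F ≤ II μ X 2 t - 2*m*I1 + m^2*F := by
    have h4 : 2*m*I1 - m^2*F ≤ I1^2/F := by
      rw [le_div_iff₀ pos]
      nlinarith [sq_nonneg (I1 - m*F)]
    linarith
  have hJm : II μ X 2 t - 2*m*I1 + m^2*F ≤ Real.exp (t*a) * V := by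
    have h1 := J_le hX hbound m t ht
    rw [J_eq hX hbound] at h1
    have h0 : (m - II μ X 1 0)^2 = 0 := by rw [hm]; ring
    rw [h0, add_zero] at h1
    exact h1
  have key2 : II μ X 2 t * F - I1^2 ≤ Real.exp (t*a) * V * F := by
    have h3 := mul_le_mul_of_nonneg_right (hmin.trans hJm) pos.le
    have h4 : (II μ X 2 t - I1^2/F) * F = II μ X 2 t * F - I1^2 := by
      field_simp
    linarith [h4 ▸ h3]
  rw [div_le_iff₀ (pow_pos pos 2)]
  have e1 : Real.exp (t*a) * Real.exp (t*a) = Real.exp (2*t*a) := by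
    rw [← Real.exp_add]; congr 1; ring
  have hone : 1 ≤ Real.exp (t*a) * F := by
    have := mul_le_mul_of_nonneg_left hFge (Real.exp_pos (t*a)).le
    rwa [← Real.exp_add, show t*a + -(t*a) = 0 from by ring, Real.exp_zero] at this
  calc II μ X 2 t * F - I1^2 ≤ Real.exp (t*a) * V * F := key2
    _ = (Real.exp (t*a) * V * F) * 1 := by ring
    _ ≤ (Real.exp (t*a) * V * F) * (Real.exp (t*a) * F) := by
        apply mul_le_mul_of_nonneg_left hone
        exact mul_nonneg (mul_nonneg (Real.exp_pos _).le hVnn) pos.le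
    _ = Real.exp (2*t*a) * V * F^2 := by rw [← e1]; ring


lemma core (hX : Measurable X) (hbound : ∀ᵐ ω ∂μ, |X ω| ≤ a) (ha : 0 < a) :
    kappa (-(2*a)) * (II μ X 2 0 - (II μ X 1 0)^2) ≤
        II μ X 1 0 + Real.log (II μ X 0 1) ∧
      II μ X 1 0 + Real.log (II μ X 0 1) ≤
        kappa (2*a) * (II μ X 2 0 - (II μ X 1 0)^2) := by
  set V := II μ X 2 0 - (II μ X 1 0)^2 with hVdef
  have hVnn : 0 ≤ V := V_nonneg hX hbound
  have pos : ∀ t, 0 < II μ X 0 t := II_zero_pos hX hbound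
  set p : ℝ → ℝ := fun t => -(II μ X 1 t) / II μ X 0 t with hpdef
  set q : ℝ → ℝ := fun t =>
    (II μ X 2 t * II μ X 0 t - (II μ X 1 t)^2) / (II μ X 0 t)^2 with hqdef
  have hp : ∀ t, HasDerivAt (fun t => Real.log (II μ X 0 t)) (p t) t := by
    intro t
    have := (II_deriv hX hbound 0 t).log (pos t).ne'
    simpa [hpdef] using this
  have hq : ∀ t, HasDerivAt p (q t) t := by
    intro t
    have h1 : HasDerivAt (fun t => -(II μ X 1 t)) (II μ X 2 t) t := by
      have h := (II_deriv hX hbound 1 t).neg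
      rw [neg_neg] at h
      exact h
    have h2 := h1.div (II_deriv hX hbound 0 t) (pos t).ne'
    refine h2.congr_deriv ?_
    simp only [hqdef]
    ring
  have contI : ∀ k, Continuous (II μ X k) := fun k => II_cont hX hbound k
  have contp : Continuous p :=
    ((contI 1).neg).div (contI 0) (fun t => (pos t).ne')
  have contq : Continuous q :=
    (((contI 2).mul (contI 0)).sub ((contI 1).pow 2)).div ((contI 0).pow 2)
      (fun t => pow_ne_zero 2 (pos t).ne')
  have eq1 : ∀ s : ℝ, p s - p 0 = ∫ t in (0:ℝ)..s, q t := by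
    intro s
    exact (intervalIntegral.integral_eq_sub_of_hasDerivAt (fun t _ => hq t)
      (contq.intervalIntegrable 0 s)).symm
  have eq2 : Real.log (II μ X 0 1) - Real.log (II μ X 0 0) =
      ∫ s in (0:ℝ)..1, p s :=
    (intervalIntegral.integral_eq_sub_of_hasDerivAt (fun t _ => hp t)
      (contp.intervalIntegrable 0 1)).symm
  have hp0 : p 0 = -(II μ X 1 0) := by
    simp [hpdef, II_zero_zero]
  have hT : II μ X 1 0 + Real.log (II μ X 0 1) =
      ∫ s in (0:ℝ)..1, (p s - p 0) := by
    rw [intervalIntegral.integral_sub (contp.intervalIntegrable 0 1)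
      (intervalIntegrable_const), ← eq2, intervalIntegral.integral_const,
      II_zero_zero, Real.log_one, hp0]
    simp only [smul_eq_mul, sub_zero, mul_neg, mul_one, sub_neg_eq_add]
    ring
  have ha2 : (2:ℝ)*a ≠ 0 := by positivity
  have hlin : ∀ t : ℝ, HasDerivAt (fun t : ℝ => -(2*t*a)) (-(2*a)) t := by
    intro t
    have h0 : (fun t : ℝ => -(2*t*a)) = fun t : ℝ => -(2*a)*t := by
      funext s; ring
    rw [h0]
    simpa using (hasDerivAt_id t).const_mul (-(2*a))
  have hlin' : ∀ t : ℝ, HasDerivAt (fun t : ℝ => 2*t*a) (2*a) t := by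
    intro t
    have h0 : (fun t : ℝ => 2*t*a) = fun t : ℝ => (2*a)*t := by
      funext s; ring
    rw [h0]
    simpa using (hasDerivAt_id t).const_mul (2*a)
  constructor
  · -- lower bound
    have contEL : Continuous (fun t : ℝ => Real.exp (-(2*t*a)) * V) := by
      fun_prop
    set gL : ℝ → ℝ := fun s => V/(2*a) - V/(2*a) * Real.exp (-(2*s*a)) with hgL
    have contgL : Continuous gL := by
      rw [hgL]; fun_prop
    have hA : ∀ t : ℝ, HasDerivAt gL (Real.exp (-(2*t*a)) * V) t := by
      intro t
      have h2 := (((hlin t).exp).const_mul (V/(2*a))).const_sub (V/(2*a))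
      refine h2.congr_deriv ?_
      field_simp
    have inner_l : ∀ s : ℝ, ∫ t in (0:ℝ)..s, Real.exp (-(2*t*a)) * V =
        gL s - gL 0 := by
      intro s
      exact intervalIntegral.integral_eq_sub_of_hasDerivAt (fun t _ => hA t)
        (contEL.intervalIntegrable 0 s)
    have stepA : ∀ s ∈ Set.Icc (0:ℝ) 1, gL s - gL 0 ≤ p s - p 0 := by
      intro s hs
      rw [eq1 s, ← inner_l s]
      apply intervalIntegral.integral_mono_on hs.1
        (contEL.intervalIntegrable 0 s)
        (contq.intervalIntegrable 0 s)
      intro t ht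
      exact psi2_lb hX hbound t ht.1
    have hB : ∀ s : ℝ, HasDerivAt
        (fun s => V/(2*a)*s + V/(2*a)/(2*a) * Real.exp (-(2*s*a)))
        (gL s - gL 0) s := by
      intro s
      have h1 := ((hlin s).exp).const_mul (V/(2*a)/(2*a))
      have h2 := ((hasDerivAt_id s).const_mul (V/(2*a))).add h1
      refine h2.congr_deriv ?_
      simp only [hgL]
      have h3 : Real.exp (-(2*(0:ℝ)*a)) = 1 := by norm_num
      rw [h3]
      field_simp
      ring
    have outer_l : ∫ s in (0:ℝ)..1, (gL s - gL 0) =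
        (V/(2*a)*1 + V/(2*a)/(2*a) * Real.exp (-(2*(1:ℝ)*a))) -
        (V/(2*a)*0 + V/(2*a)/(2*a) * Real.exp (-(2*(0:ℝ)*a))) :=
      intervalIntegral.integral_eq_sub_of_hasDerivAt (fun s _ => hB s)
        ((Continuous.intervalIntegrable (by exact contgL.sub continuous_const :
          Continuous (fun s => gL s - gL 0))) 0 1)
    have contp0 : Continuous (fun s => p s - p 0) := contp.sub continuous_const
    have contgL0 : Continuous (fun s => gL s - gL 0) := contgL.sub continuous_const
    have hmono := intervalIntegral.integral_mono_on zero_le_one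
      (contgL0.intervalIntegrable (μ := volume) 0 1)
      (contp0.intervalIntegrable (μ := volume) 0 1) stepA
    rw [outer_l] at hmono
    rw [hT]
    refine le_trans (le_of_eq ?_) hmono
    rw [kappa, if_neg (neg_ne_zero.mpr (by positivity : (2*a) ≠ 0))]
    have e0 : Real.exp (-(2*(0:ℝ)*a)) = 1 := by norm_num
    have e1 : Real.exp (-(2*(1:ℝ)*a)) = Real.exp (-(2*a)) := by norm_num
    rw [e0, e1]
    field_simp
    ring
  · -- upper bound
    have contEU : Continuous (fun t : ℝ => Real.exp (2*t*a) * V) := by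
      fun_prop
    set gU : ℝ → ℝ := fun s => V/(2*a) * Real.exp (2*s*a) - V/(2*a) with hgU
    have contgU : Continuous gU := by
      rw [hgU]; fun_prop
    have hA : ∀ t : ℝ, HasDerivAt gU (Real.exp (2*t*a) * V) t := by
      intro t
      have h2 := (((hlin' t).exp).const_mul (V/(2*a))).sub_const (V/(2*a))
      refine h2.congr_deriv ?_
      field_simp
    have inner_u : ∀ s : ℝ, ∫ t in (0:ℝ)..s, Real.exp (2*t*a) * V =
        gU s - gU 0 := by
      intro s
      exact intervalIntegral.integral_eq_sub_of_hasDerivAt (fun t _ => hA t)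
        (contEU.intervalIntegrable 0 s)
    have stepA : ∀ s ∈ Set.Icc (0:ℝ) 1, p s - p 0 ≤ gU s - gU 0 := by
      intro s hs
      rw [eq1 s, ← inner_u s]
      apply intervalIntegral.integral_mono_on hs.1
        (contq.intervalIntegrable 0 s)
        (contEU.intervalIntegrable 0 s)
      intro t ht
      exact psi2_ub hX hbound t ht.1
    have hB : ∀ s : ℝ, HasDerivAt
        (fun s => V/(2*a)/(2*a) * Real.exp (2*s*a) - V/(2*a)*s)
        (gU s - gU 0) s := by
      intro s
      have h1 := ((hlin' s).exp).const_mul (V/(2*a)/(2*a))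
      have h2 := h1.sub ((hasDerivAt_id s).const_mul (V/(2*a)))
      refine h2.congr_deriv ?_
      simp only [hgU]
      have h3 : Real.exp (2*(0:ℝ)*a) = 1 := by norm_num
      rw [h3]
      field_simp
      ring
    have outer_u : ∫ s in (0:ℝ)..1, (gU s - gU 0) =
        (V/(2*a)/(2*a) * Real.exp (2*(1:ℝ)*a) - V/(2*a)*1) -
        (V/(2*a)/(2*a) * Real.exp (2*(0:ℝ)*a) - V/(2*a)*0) :=
      intervalIntegral.integral_eq_sub_of_hasDerivAt (fun s _ => hB s)
        ((Continuous.intervalIntegrable (by exact contgU.sub continuous_const :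
          Continuous (fun s => gU s - gU 0))) 0 1)
    have contp0 : Continuous (fun s => p s - p 0) := contp.sub continuous_const
    have contgU0 : Continuous (fun s => gU s - gU 0) := contgU.sub continuous_const
    have hmono := intervalIntegral.integral_mono_on zero_le_one
      (contp0.intervalIntegrable (μ := volume) 0 1)
      (contgU0.intervalIntegrable (μ := volume) 0 1) stepA
    rw [outer_u] at hmono
    rw [hT]
    refine le_trans hmono (le_of_eq ?_)
    rw [kappa, if_neg (by positivity : (2*a) ≠ 0)]
    have e0 : Real.exp (2*(0:ℝ)*a) = 1 := by norm_num
    have e1 : Real.exp (2*(1:ℝ)*a) = Real.exp (2*a) := by norm_num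
    rw [e0, e1]
    field_simp
    ring

end

/-- For any bounded random variable `X` taking values in `[-a,a]`,
`κ(-2a)·Var(X) ≤ E[X] + log E[e^{-X}] ≤ κ(2a)·Var(X)`. -/
theorem stmt0 {Ω : Type*} [MeasurableSpace Ω] (μ : Measure Ω) [IsProbabilityMeasure μ]
    (X : Ω → ℝ) (hX : Measurable X) (a : ℝ) (hbound : ∀ᵐ ω ∂μ, |X ω| ≤ a) :
    kappa (-(2*a)) * (∫ ω, (X ω - ∫ ω', X ω' ∂μ) ^ 2 ∂μ) ≤
      (∫ ω, X ω ∂μ) + Real.log (∫ ω, Real.exp (-X ω) ∂μ) ∧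
    (∫ ω, X ω ∂μ) + Real.log (∫ ω, Real.exp (-X ω) ∂μ) ≤
      kappa (2*a) * (∫ ω, (X ω - ∫ ω', X ω' ∂μ) ^ 2 ∂μ) := by
  have hne : μ ≠ 0 := IsProbabilityMeasure.ne_zero μ
  have : (ae μ).NeBot := ae_neBot.2 hne
  obtain ⟨ω₀, hω₀⟩ := hbound.exists
  have ha0 : 0 ≤ a := le_trans (abs_nonneg _) hω₀
  rcases ha0.eq_or_lt with h0 | hpos
  · -- a = 0 case : X = 0 a.e.
    have hX0 : X =ᵐ[μ] 0 := by
      filter_upwards [hbound] with ω h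
      rw [← h0] at h
      exact abs_nonpos_iff.mp h
    have hm : ∫ ω, X ω ∂μ = 0 := by
      rw [integral_congr_ae hX0]; simp
    have hE : ∫ ω, Real.exp (-X ω) ∂μ = 1 := by
      have h1 : (fun ω => Real.exp (-X ω)) =ᵐ[μ] (fun _ => (1:ℝ)) := by
        filter_upwards [hX0] with ω h
        simp [h]
      rw [integral_congr_ae h1]
      simp
    have hV : ∫ ω, (X ω - ∫ ω', X ω' ∂μ)^2 ∂μ = 0 := by
      have h1 : (fun ω => (X ω - ∫ ω', X ω' ∂μ)^2) =ᵐ[μ] (fun _ => (0:ℝ)) := by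
        filter_upwards [hX0] with ω h
        simp [h, hm]
      rw [integral_congr_ae h1]
      simp
    rw [hV, hm, hE]
    simp
  · have hm : (∫ ω, X ω ∂μ) = II μ X 1 0 := by simp [II]
    have hE : (∫ ω, Real.exp (-X ω) ∂μ) = II μ X 0 1 := by simp [II]
    have hV : (∫ ω, (X ω - ∫ ω', X ω' ∂μ)^2 ∂μ) = II μ X 2 0 - (II μ X 1 0)^2 := by
      have h := var_eq hX hbound (II μ X 1 0)
      simp only [zero_mul, neg_zero, Real.exp_zero, mul_one] at h
      rw [hm, h]
      simp
    rw [hV, hm, hE]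
    exact core hX hbound hpos
end

section
/- The function κ(x) = (e^x - x - 1)/x² (with κ(0) = 1/2) is nondecreasing on ℝ. -/
lemma kappa_eq (x : ℝ) :
    kappa x = ∫ t in (0:ℝ)..1, (1 - t) * Real.exp (t * x) := by
  by_cases hx : x = 0
  · subst hx
    simp only [kappa, if_pos rfl, mul_zero, Real.exp_zero, mul_one]
    rw [intervalIntegral.integral_sub intervalIntegrable_const
      (intervalIntegral.intervalIntegrable_id)]
    simp [integral_id]
    norm_num
  · have key : ∀ t ∈ Set.uIcc (0:ℝ) 1,
        HasDerivAt (fun t : ℝ => (x * (1 - t) + 1) * Real.exp (t * x) / x ^ 2)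
          ((1 - t) * Real.exp (t * x)) t := by
      intro t _
      have h1 : HasDerivAt (fun t : ℝ => x * (1 - t) + 1) (-x) t := by
        have := ((hasDerivAt_id t).const_sub 1).const_mul x
        simpa using this.add_const 1
      have h2 : HasDerivAt (fun t : ℝ => Real.exp (t * x)) (x * Real.exp (t * x)) t := by
        have := (Real.hasDerivAt_exp (t * x)).comp t ((hasDerivAt_id t).mul_const x)
        simpa [mul_comm, Function.comp_def] using this
      have h3 := (h1.mul h2).div_const (x ^ 2)
      exact h3.congr_deriv (by rw [div_eq_iff (pow_ne_zero 2 hx)]; ring)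
    have := intervalIntegral.integral_eq_sub_of_hasDerivAt key
      (by
        apply Continuous.intervalIntegrable
        continuity)
    rw [this]
    simp only [kappa, if_neg hx]
    simp only [zero_mul, one_mul, Real.exp_zero]
    field_simp
    ring

/-- The function `κ(x) = (e^x - x - 1)/x²` (with `κ(0) = 1/2`) is nondecreasing on `ℝ`. -/
theorem stmt1 : Monotone kappa := by
  intro x y hxy
  rw [kappa_eq, kappa_eq]
  have hf : IntervalIntegrable (fun t : ℝ => (1 - t) * Real.exp (t * x))
      MeasureTheory.volume 0 1 :=
    (by continuity : Continuous fun t : ℝ => (1 - t) * Real.exp (t * x)).intervalIntegrable 0 1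
  have hg : IntervalIntegrable (fun t : ℝ => (1 - t) * Real.exp (t * y))
      MeasureTheory.volume 0 1 :=
    (by continuity : Continuous fun t : ℝ => (1 - t) * Real.exp (t * y)).intervalIntegrable 0 1
  apply intervalIntegral.integral_mono_on (by norm_num) hf hg
  · intro t ht
    rcases ht with ⟨ht0, ht1⟩
    apply mul_le_mul_of_nonneg_left _ (by linarith)
    exact Real.exp_le_exp.2 (mul_le_mul_of_nonneg_left hxy ht0)
end

section
/- E[X] + log E[e^{-X}] = min over μ ∈ [-a,a] of E[e^{μ-X} - (μ-X) - 1], for any random variable X with values in [-a,a]; the minimum is attained at μ = -log E[e^{-X}]. -/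
open MeasureTheory Real

/-- `E[X] + log E[e^{-X}] = min_{μ₀ ∈ [-a,a]} E[e^{μ₀-X} - (μ₀-X) - 1]`, the minimum
being attained at `μ₀ = -log E[e^{-X}]` (which lies in `[-a,a]`). -/
theorem stmt2 {Ω : Type*} [MeasurableSpace Ω] (μ : Measure Ω) [IsProbabilityMeasure μ]
    (X : Ω → ℝ) (hX : Measurable X) (a : ℝ) (ha : 0 ≤ a)
    (hbound : ∀ᵐ ω ∂μ, |X ω| ≤ a) :
    (-Real.log (∫ ω, Real.exp (-X ω) ∂μ)) ∈ Set.Icc (-a) a ∧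
    (∫ ω, (Real.exp ((-Real.log (∫ ω', Real.exp (-X ω') ∂μ)) - X ω)
        - ((-Real.log (∫ ω', Real.exp (-X ω') ∂μ)) - X ω) - 1) ∂μ)
      = (∫ ω, X ω ∂μ) + Real.log (∫ ω, Real.exp (-X ω) ∂μ) ∧
    ∀ m ∈ Set.Icc (-a) a,
      (∫ ω, (Real.exp ((-Real.log (∫ ω', Real.exp (-X ω') ∂μ)) - X ω)
          - ((-Real.log (∫ ω', Real.exp (-X ω') ∂μ)) - X ω) - 1) ∂μ)
        ≤ ∫ ω, (Real.exp (m - X ω) - (m - X ω) - 1) ∂μ := by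
  have hXi : Integrable X μ :=
    (integrable_const a).mono' hX.aestronglyMeasurable
      (hbound.mono fun ω h => by simpa using h)
  have hEi : Integrable (fun ω => Real.exp (-X ω)) μ :=
    (integrable_const (Real.exp a)).mono' hX.neg.exp.aestronglyMeasurable
      (hbound.mono fun ω h => by
        rw [Real.norm_eq_abs, abs_of_pos (Real.exp_pos _)]
        exact Real.exp_le_exp.2 (by linarith [(abs_le.1 h).1]))
  set Z : ℝ := ∫ ω, Real.exp (-X ω) ∂μ with hZ
  have hZlo : Real.exp (-a) ≤ Z := by
    calc Real.exp (-a) = ∫ _ω, Real.exp (-a) ∂μ := by simp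
    _ ≤ Z := integral_mono_ae (integrable_const _) hEi
        (hbound.mono fun ω h => Real.exp_le_exp.2 (by linarith [(abs_le.1 h).2]))
  have hZhi : Z ≤ Real.exp a := by
    have := integral_mono_ae hEi (integrable_const (Real.exp a))
        (hbound.mono fun ω h => Real.exp_le_exp.2 (by linarith [(abs_le.1 h).1]))
    simpa using this
  have hZpos : 0 < Z := lt_of_lt_of_le (Real.exp_pos _) hZlo
  have hlog1 : Real.log Z ≤ a := (Real.log_le_iff_le_exp hZpos).2 hZhi
  have hlog2 : -a ≤ Real.log Z := (Real.le_log_iff_exp_le hZpos).2 hZlo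
  have key : ∀ m : ℝ, (∫ ω, (Real.exp (m - X ω) - (m - X ω) - 1) ∂μ)
      = Real.exp m * Z - m + (∫ ω, X ω ∂μ) - 1 := by
    intro m
    have hfun : (fun ω => Real.exp (m - X ω) - (m - X ω) - 1)
        = fun ω => Real.exp m * Real.exp (-X ω) - (m - X ω) - 1 := by
      funext ω; rw [← Real.exp_add]; ring_nf
    have h1 : Integrable (fun ω => Real.exp m * Real.exp (-X ω)) μ :=
      hEi.const_mul _
    have h2 : Integrable (fun ω => m - X ω) μ := (integrable_const m).sub hXi
    have e1 : (∫ ω, (Real.exp m * Real.exp (-X ω) - (m - X ω) - 1) ∂μ)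
        = (∫ ω, (Real.exp m * Real.exp (-X ω) - (m - X ω)) ∂μ) - ∫ _ω, (1:ℝ) ∂μ :=
      integral_sub (h1.sub h2) (integrable_const 1)
    have e2 : (∫ ω, (Real.exp m * Real.exp (-X ω) - (m - X ω)) ∂μ)
        = (∫ ω, Real.exp m * Real.exp (-X ω) ∂μ) - ∫ ω, (m - X ω) ∂μ :=
      integral_sub h1 h2
    have e3 : (∫ ω, (m - X ω) ∂μ) = (∫ _ω, m ∂μ) - ∫ ω, X ω ∂μ :=
      integral_sub (integrable_const m) hXi
    rw [hfun, e1, e2, e3, integral_const_mul]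
    simp; ring
  have hexp : Real.exp (-Real.log Z) = Z⁻¹ := by
    rw [Real.exp_neg, Real.exp_log hZpos]
  have hval : (∫ ω, (Real.exp ((-Real.log Z) - X ω) - ((-Real.log Z) - X ω) - 1) ∂μ)
      = (∫ ω, X ω ∂μ) + Real.log Z := by
    rw [key, hexp, inv_mul_cancel₀ (ne_of_gt hZpos)]; ring
  refine ⟨⟨by linarith, by linarith⟩, hval, fun m _hm => ?_⟩
  rw [hval, key]
  have h := Real.add_one_le_exp (m + Real.log Z)
  rw [Real.exp_add, Real.exp_log hZpos] at h
  linarith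
end

section
/- Suppose for a single distribution P, an optimal f* and all f in a model, the u-Bernstein condition holds: E[(ℓ_f - ℓ_{f*})²] - (E[ℓ_f - ℓ_{f*}])² ≤ u(E[ℓ_f - ℓ_{f*}]), where u is nondecreasing, positive on (0,∞), with u(x)/x nonincreasing and losses take values in [0,a]. Fix b > 0 and set c = 1/κ(2ba) where κ(x)=(e^x-x-1)/x². Then for every ε > 0 and η = min(cε/u(ε), b), every f with E[ℓ_f - ℓ_{f*}] ≥ 0 satisfies E[e^{η(ℓ_{f*} - ℓ_f)}] ≤ e^{ηε}. -/
open MeasureTheory Real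

lemma exp_tail_eq (x : ℝ) :
    Real.exp x - x - 1 = ∑' n : ℕ, x ^ (n + 2) / (n + 2).factorial := by
  have hexp : Real.exp x = ∑' n : ℕ, x ^ n / n.factorial := by
    rw [Real.exp_eq_exp_ℝ, NormedSpace.exp_eq_tsum_div]
  have h := Summable.sum_add_tsum_nat_add 2 (Real.summable_pow_div_factorial x)
  rw [← hexp] at h
  simp [Finset.sum_range_succ] at h
  linarith

lemma summable_tail (x : ℝ) :
    Summable (fun n : ℕ => x ^ (n + 2) / (n + 2).factorial) :=
  (summable_nat_add_iff 2).mpr (Real.summable_pow_div_factorial x)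

lemma exp_quad_bound {t y : ℝ} (ht : 0 < t) (hy : |y| ≤ t) :
    Real.exp y ≤ 1 + y + (Real.exp t - t - 1) / t ^ 2 * y ^ 2 := by
  have ht0 : t ≠ 0 := ne_of_gt ht
  have hg : Summable (fun n : ℕ => t ^ n / (n + 2).factorial) := by
    have := (summable_tail t).mul_left (1 / t ^ 2)
    refine this.congr fun n => ?_
    field_simp [pow_succ]
    ring
  have hyg : Summable (fun n : ℕ => y ^ 2 * (t ^ n / (n + 2).factorial)) :=
    hg.mul_left _
  have hterm : ∀ n : ℕ, y ^ (n + 2) / (n + 2).factorial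
      ≤ y ^ 2 * (t ^ n / (n + 2).factorial) := by
    intro n
    have hfac : (0:ℝ) < (n + 2).factorial := by positivity
    have h1 : y ^ (n + 2) ≤ y ^ 2 * t ^ n := by
      calc y ^ (n + 2) ≤ |y ^ (n + 2)| := le_abs_self _
        _ = y ^ 2 * |y| ^ n := by
            rw [abs_pow]
            have : |y| ^ (n + 2) = |y| ^ 2 * |y| ^ n := by ring
            rw [this, sq_abs]
        _ ≤ y ^ 2 * t ^ n := by
            have := pow_le_pow_left₀ (abs_nonneg y) hy n
            nlinarith [sq_nonneg y]
    calc y ^ (n + 2) / (n + 2).factorial ≤ (y ^ 2 * t ^ n) / (n + 2).factorial := by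
          gcongr
      _ = y ^ 2 * (t ^ n / (n + 2).factorial) := by ring
  have hsum : Real.exp y - y - 1 ≤ y ^ 2 * ∑' n : ℕ, t ^ n / (n + 2).factorial := by
    rw [exp_tail_eq y]
    calc ∑' n : ℕ, y ^ (n + 2) / (n + 2).factorial
        ≤ ∑' n : ℕ, y ^ 2 * (t ^ n / (n + 2).factorial) :=
          Summable.tsum_le_tsum hterm (summable_tail y) hyg
      _ = y ^ 2 * ∑' n : ℕ, t ^ n / (n + 2).factorial := tsum_mul_left
  have hteq : Real.exp t - t - 1 = t ^ 2 * ∑' n : ℕ, t ^ n / (n + 2).factorial := by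
    rw [exp_tail_eq t, ← tsum_mul_left]
    congr 1
    funext n
    field_simp [pow_succ]
    ring
  have : (Real.exp t - t - 1) / t ^ 2 * y ^ 2
      = y ^ 2 * ∑' n : ℕ, t ^ n / (n + 2).factorial := by
    rw [hteq]
    field_simp
  linarith [hsum, this ▸ hsum]

/-- Bernstein implies central: under the `u`-Bernstein condition with losses in `[0,a]`,
for every `ε > 0` and `η = min(c·ε/u(ε), b)` with `c = 1/κ(2ba)`, every `f` with
nonnegative excess risk satisfies `E[e^{η(ℓ_{f*} - ℓ_f)}] ≤ e^{ηε}`. -/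
theorem stmt10 {Ω ι : Type*} [MeasurableSpace Ω] (P : Measure Ω) [IsProbabilityMeasure P]
    (L : ι → Ω → ℝ) (fstar : ι) (a b : ℝ) (ha : 0 < a) (hb : 0 < b)
    (hmeas : ∀ f, Measurable (L f)) (hrange : ∀ f z, L f z ∈ Set.Icc 0 a)
    (u : ℝ → ℝ) (hu_mono : Monotone u) (hu_pos : ∀ x > 0, 0 < u x)
    (hu_ratio : AntitoneOn (fun x => u x / x) (Set.Ioi 0))
    (hbern : ∀ f, (∫ z, (L f z - L fstar z)^2 ∂P) - (∫ z, (L f z - L fstar z) ∂P)^2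
      ≤ u (∫ z, (L f z - L fstar z) ∂P))
    (c : ℝ) (hc : c = 1 / ((Real.exp (2*b*a) - 2*b*a - 1) / (2*b*a)^2)) :
    ∀ ε > 0, ∀ f, 0 ≤ ∫ z, (L f z - L fstar z) ∂P →
      ∀ η, η = min (c * ε / u ε) b →
        ∫ z, Real.exp (η * (L fstar z - L f z)) ∂P ≤ Real.exp (η * ε) := by
  intro ε hε f hμ0 η hη
  set t : ℝ := 2 * b * a with htdef
  have ht : 0 < t := by rw [htdef]; positivity
  clear_value t
  set K : ℝ := (Real.exp t - t - 1) / t ^ 2 with hKdef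
  clear_value K
  have hK : 0 < K := by
    have := Real.add_one_lt_exp (ne_of_gt ht)
    have h2 : (0:ℝ) < t ^ 2 := by positivity
    rw [hKdef]
    exact div_pos (by linarith) h2
  have hcK : c = 1 / K := hc
  have hcpos : 0 < c := by rw [hcK]; positivity
  have hKc : K * c = 1 := by rw [hcK]; field_simp
  have huε : 0 < u ε := hu_pos ε hε
  have hηpos : 0 < η := by
    rw [hη]; exact lt_min (by positivity) hb
  have hηb : η ≤ b := hη ▸ min_le_right _ _
  have hηu : η * u ε ≤ c * ε := by
    have h1 : η ≤ c * ε / u ε := hη ▸ min_le_left _ _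
    calc η * u ε ≤ (c * ε / u ε) * u ε := by nlinarith
      _ = c * ε := by field_simp
  -- the excess loss
  have hbernf := hbern f
  set X : Ω → ℝ := fun z => L f z - L fstar z with hXdef
  have hXmeas : Measurable X := by rw [hXdef]; exact (hmeas f).sub (hmeas fstar)
  clear_value X
  have hXb : ∀ z, |X z| ≤ a := by
    intro z
    obtain ⟨h1, h2⟩ := hrange f z
    obtain ⟨h3, h4⟩ := hrange fstar z
    rw [abs_le]; constructor <;> simp [hXdef] <;> linarith
  set μ : ℝ := ∫ z, X z ∂P with hμdef
  clear_value μ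
  have bdd_int : ∀ (g : Ω → ℝ) (C : ℝ), Measurable g → (∀ z, |g z| ≤ C) →
      Integrable g P := by
    intro g C hg hgb
    exact Integrable.mono' (integrable_const C) hg.aestronglyMeasurable
      (Filter.Eventually.of_forall fun z => by simpa using hgb z)
  have hI1 : Integrable X P := bdd_int X a hXmeas hXb
  have hIX2 : Integrable (fun z => X z ^ 2) P := by
    refine bdd_int _ (a ^ 2) (hXmeas.pow_const 2) fun z => ?_
    rw [abs_pow, sq_abs]
    have h := abs_le.mp (hXb z)
    nlinarith [h.1, h.2]
  have hμa : |μ| ≤ a := by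
    rw [hμdef]
    have := norm_integral_le_of_norm_le_const
      (C := a) (f := X) (μ := P) (Filter.Eventually.of_forall fun z => by simpa using hXb z)
    simpa using this
  have hXμ : ∀ z, |X z - μ| ≤ 2 * a := by
    intro z
    have h1 := hXb z
    have h2 := hμa
    rw [abs_le] at *
    constructor <;> linarith [h1.1, h1.2, h2.1, h2.2]
  have hIc : Integrable (fun z => (X z - μ) ^ 2) P := by
    refine bdd_int _ ((2 * a) ^ 2) ((hXmeas.sub measurable_const).pow_const 2) fun z => ?_
    rw [abs_pow, sq_abs]
    have h := abs_le.mp (hXμ z)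
    nlinarith [h.1, h.2]
  set V : ℝ := ∫ z, (X z - μ) ^ 2 ∂P with hVdef
  clear_value V
  have hVnonneg : 0 ≤ V := by
    rw [hVdef]; exact integral_nonneg fun z => sq_nonneg _
  -- pointwise exponential bound
  have hpoint : ∀ z, Real.exp (-η * (X z - μ))
      ≤ 1 + (-η) * (X z - μ) + (K * η ^ 2) * (X z - μ) ^ 2 := by
    intro z
    have habs : |(-η) * (X z - μ)| ≤ t := by
      rw [abs_mul, abs_neg, abs_of_pos hηpos]
      calc η * |X z - μ| ≤ b * (2 * a) := by
            have := hXμ z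
            nlinarith [abs_nonneg (X z - μ)]
        _ = t := by rw [htdef]; ring
    have := exp_quad_bound ht habs
    rw [← hKdef] at this
    calc Real.exp (-η * (X z - μ))
        ≤ 1 + (-η) * (X z - μ) + K * ((-η) * (X z - μ)) ^ 2 := this
      _ = 1 + (-η) * (X z - μ) + (K * η ^ 2) * (X z - μ) ^ 2 := by ring
  have hIe : Integrable (fun z => Real.exp (-η * (X z - μ))) P := by
    refine bdd_int _ (Real.exp t) (Real.measurable_exp.comp
      ((hXmeas.sub measurable_const).const_mul (-η))) fun z => ?_
    rw [abs_of_pos (Real.exp_pos _)]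
    apply Real.exp_le_exp.mpr
    have habs : |(-η) * (X z - μ)| ≤ t := by
      rw [abs_mul, abs_neg, abs_of_pos hηpos]
      calc η * |X z - μ| ≤ b * (2 * a) := by
            have := hXμ z
            nlinarith [abs_nonneg (X z - μ)]
        _ = t := by rw [htdef]; ring
    calc -η * (X z - μ) ≤ |(-η) * (X z - μ)| := le_abs_self _
      _ ≤ t := habs
  have hI2full : Integrable
      (fun z => 1 + (-η) * (X z - μ) + (K * η ^ 2) * (X z - μ) ^ 2) P := by
    exact ((integrable_const 1).add
      ((hI1.sub (integrable_const μ)).const_mul (-η))).add (hIc.const_mul _)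
  have hint_le : ∫ z, Real.exp (-η * (X z - μ)) ∂P
      ≤ ∫ z, (1 + (-η) * (X z - μ) + (K * η ^ 2) * (X z - μ) ^ 2) ∂P :=
    integral_mono hIe hI2full fun z => hpoint z
  have hXsubμ : ∫ z, (X z - μ) ∂P = 0 := by
    rw [integral_sub hI1 (integrable_const μ), integral_const]
    simp [hμdef]
  have hIlin : Integrable (fun z => (-η) * (X z - μ)) P := by
    exact (hI1.sub (integrable_const μ)).const_mul (-η)
  have hIquad : Integrable (fun z => (K * η ^ 2) * (X z - μ) ^ 2) P := by
    exact hIc.const_mul _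
  have hIone : Integrable (fun z => (1:ℝ) + (-η) * (X z - μ)) P := by
    exact (integrable_const 1).add hIlin
  have hRHS : ∫ z, (1 + (-η) * (X z - μ) + (K * η ^ 2) * (X z - μ) ^ 2) ∂P
      = 1 + K * η ^ 2 * V := by
    rw [integral_add hIone hIquad, integral_add (integrable_const 1) hIlin,
      integral_const_mul, integral_const_mul, hXsubμ, integral_const]
    simp [hVdef]
  -- variance bound via Bernstein
  have hVeq : V = (∫ z, X z ^ 2 ∂P) - μ ^ 2 := by
    have hfun : (fun z => (X z - μ) ^ 2)
        = fun z => X z ^ 2 - (2 * μ) * X z + μ ^ 2 := by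
      funext z; ring
    have hIa : Integrable (fun z => X z ^ 2 - (2 * μ) * X z) P := by
      exact hIX2.sub (hI1.const_mul _)
    have hIb : Integrable (fun z => (2 * μ) * X z) P := by
      exact hI1.const_mul _
    rw [hVdef, hfun, integral_add hIa (integrable_const (μ ^ 2)),
      integral_sub hIX2 hIb, integral_const_mul, integral_const]
    simp [hμdef]
    ring
  have hVle : V ≤ u μ := by
    rw [hVeq]
    simpa [hXdef] using hbernf
  -- the scalar inequality : K * η * V ≤ ε + μ
  have hscal : K * η * V ≤ ε + μ := by
    rcases le_or_gt μ ε with hcase | hcase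
    · have h1 : u μ ≤ u ε := hu_mono hcase
      have hKη : 0 < K * η := mul_pos hK hηpos
      have h2 : K * η * V ≤ K * η * u ε :=
        mul_le_mul_of_nonneg_left (le_trans hVle h1) hKη.le
      have h3 : K * (η * u ε) ≤ K * (c * ε) :=
        mul_le_mul_of_nonneg_left hηu hK.le
      have h4 : K * (c * ε) = ε := by rw [← mul_assoc, hKc, one_mul]
      linarith only [h2, h3, h4, hμ0]
    · have hμpos : 0 < μ := lt_trans hε hcase
      have hr := hu_ratio (Set.mem_Ioi.mpr hε) (Set.mem_Ioi.mpr hμpos) (le_of_lt hcase)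
      simp only at hr
      have h1 : u μ * ε ≤ u ε * μ := by
        rw [div_le_div_iff₀ hμpos hε] at hr
        linarith
      have hKη : 0 < K * η := mul_pos hK hηpos
      have h2 : K * η * V ≤ K * η * u μ :=
        mul_le_mul_of_nonneg_left hVle hKη.le
      have h3 : η * (u μ * ε) ≤ η * (u ε * μ) :=
        mul_le_mul_of_nonneg_left h1 hηpos.le
      have h4 : (η * u ε) * μ ≤ (c * ε) * μ :=
        mul_le_mul_of_nonneg_right hηu hμpos.le
      have h5 : η * u μ ≤ c * μ := by
        have h6 : η * u μ * ε ≤ c * μ * ε := by linarith only [h3, h4]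
        exact le_of_mul_le_mul_right h6 hε
      have h7 : K * (η * u μ) ≤ K * (c * μ) :=
        mul_le_mul_of_nonneg_left h5 hK.le
      have h8 : K * (c * μ) = μ := by rw [← mul_assoc, hKc, one_mul]
      linarith only [h2, h7, h8, hε]
  -- put it together
  have hsplit : ∫ z, Real.exp (η * (L fstar z - L f z)) ∂P
      = Real.exp (-η * μ) * ∫ z, Real.exp (-η * (X z - μ)) ∂P := by
    rw [← integral_const_mul]
    congr 1
    funext z
    rw [← Real.exp_add]
    congr 1
    simp [hXdef]
    ring
  rw [hsplit]
  have hexp1 : Real.exp (-η * μ) * ∫ z, Real.exp (-η * (X z - μ)) ∂P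
      ≤ Real.exp (-η * μ) * (1 + K * η ^ 2 * V) := by
    apply mul_le_mul_of_nonneg_left _ (le_of_lt (Real.exp_pos _))
    rw [← hRHS]
    exact hint_le
  have hexp2 : 1 + K * η ^ 2 * V ≤ Real.exp (K * η ^ 2 * V) := by
    linarith [Real.add_one_le_exp (K * η ^ 2 * V)]
  have hexp3 : Real.exp (-η * μ) * (1 + K * η ^ 2 * V)
      ≤ Real.exp (-η * μ + K * η ^ 2 * V) := by
    rw [Real.exp_add]
    apply mul_le_mul_of_nonneg_left hexp2 (le_of_lt (Real.exp_pos _))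
  have hfin : -η * μ + K * η ^ 2 * V ≤ η * ε := by
    have h9 := mul_le_mul_of_nonneg_left hscal hηpos.le
    linarith only [h9]
  calc Real.exp (-η * μ) * ∫ z, Real.exp (-η * (X z - μ)) ∂P
      ≤ Real.exp (-η * μ) * (1 + K * η ^ 2 * V) := hexp1
    _ ≤ Real.exp (-η * μ + K * η ^ 2 * V) := hexp3
    _ ≤ Real.exp (η * ε) := Real.exp_le_exp.mpr hfin
end

section
/- Suppose for a distribution P, optimal f* and every f in a model with losses in [0,a], and for η = v(ε) ≤ b, the η-pseudoprobability convexity condition up to ε holds for the two-point mixture Π = ½δ_{f*} + ½δ_f: E_{Z~P}[ℓ_{f*}(Z)] ≤ E_{Z~P}[-(1/η) log(½e^{-ηℓ_{f*}(Z)} + ½e^{-ηℓ_f(Z)})] + ε. Then Var_{Z~P}(ℓ_f(Z) - ℓ_{f*}(Z)) ≤ (2/(κ(-2ab)·η))·(E_{Z~P}[ℓ_f(Z) - ℓ_{f*}(Z)] + 2ε). -/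
open MeasureTheory Real


lemma lemA (x : ℝ) (hx : 0 ≤ x) : (2 - x) * Real.exp x ≤ x + 2 := by
  have hd : ∀ t : ℝ, HasDerivAt (fun x : ℝ => x + 2 - (2 - x) * Real.exp x)
      (1 + (t - 1) * Real.exp t) t := by
    intro t
    have h1 := ((hasDerivAt_const t (2:ℝ)).sub (hasDerivAt_id t)).mul (Real.hasDerivAt_exp t)
    have h2 := (hasDerivAt_id t).add_const (2:ℝ)
    have h3 := h2.sub h1
    simp only [id_eq] at h3
    refine h3.congr_deriv ?_
    simp only [Pi.sub_apply, id_eq]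
    ring
  have hmono : MonotoneOn (fun x : ℝ => x + 2 - (2 - x) * Real.exp x) (Set.Ici 0) := by
    apply monotoneOn_of_deriv_nonneg (convex_Ici 0)
    · exact fun t _ => ((hd t).continuousAt).continuousWithinAt
    · exact fun t _ => ((hd t).differentiableAt).differentiableWithinAt
    · intro t _
      rw [(hd t).deriv]
      have h1 : 1 - t ≤ Real.exp (-t) := by linarith [Real.add_one_le_exp (-t)]
      have h2 : Real.exp (-t) * Real.exp t = 1 := by rw [← Real.exp_add]; simp
      nlinarith [Real.exp_pos t, Real.exp_pos (-t)]
  have h0 := hmono (Set.self_mem_Ici) (Set.mem_Ici.mpr hx) hx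
  simp at h0
  nlinarith [h0]

lemma lemB {x y : ℝ} (hx : 0 < x) (hxy : x ≤ y) :
    (Real.exp (-y) + y - 1) * x^2 ≤ (Real.exp (-x) + x - 1) * y^2 := by
  have hy : 0 < y := lt_of_lt_of_le hx hxy
  set h : ℝ → ℝ := fun t => (Real.exp (-t) + t - 1) / t^2 with hh
  have hd : ∀ t : ℝ, 0 < t → HasDerivAt h
      (((-Real.exp (-t) + 1) * t^2 - (Real.exp (-t) + t - 1) * (2*t)) / (t^2)^2) t := by
    intro t ht
    have hN : HasDerivAt (fun t : ℝ => Real.exp (-t) + t - 1) (-Real.exp (-t) + 1) t := by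
      have he : HasDerivAt (fun t : ℝ => Real.exp (-t)) (-Real.exp (-t)) t := by
        have := (Real.hasDerivAt_exp (-t)).comp t (hasDerivAt_neg t)
        refine this.congr_deriv ?_; ring
      exact (he.add (hasDerivAt_id t)).sub_const 1
    have hD : HasDerivAt (fun t : ℝ => t^2) (2*t) t := by
      simpa [mul_comm] using hasDerivAt_pow 2 t
    exact hN.div hD (by positivity)
  have hanti : AntitoneOn h (Set.Icc x y) := by
    apply antitoneOn_of_deriv_nonpos (convex_Icc x y)
    · intro t ht
      exact ((hd t (lt_of_lt_of_le hx ht.1)).continuousAt).continuousWithinAt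
    · intro t ht
      rw [interior_Icc] at ht
      exact ((hd t (lt_trans hx ht.1)).differentiableAt).differentiableWithinAt
    · intro t ht
      rw [interior_Icc] at ht
      have htp : 0 < t := lt_trans hx ht.1
      rw [(hd t htp).deriv]
      apply div_nonpos_of_nonpos_of_nonneg _ (by positivity)
      have hA := lemA t htp.le
      have h2 : Real.exp (-t) * Real.exp t = 1 := by rw [← Real.exp_add]; simp
      nlinarith [Real.exp_pos t, Real.exp_pos (-t)]
  have := hanti (Set.mem_Icc.mpr ⟨le_refl x, hxy⟩) (Set.mem_Icc.mpr ⟨hxy, le_refl y⟩) hxy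
  rw [hh] at this
  simp only at this
  rw [div_le_div_iff₀ (by positivity) (by positivity)] at this
  linarith

lemma lemC {u : ℝ} (hu0 : 0 < u) (hu1 : u ≤ 1) :
    u - 1 ≤ -Real.log u + 4 * Real.log ((1+u)/2) := by
  set g : ℝ → ℝ := fun u => -Real.log u + 4 * Real.log ((1+u)/2) - u + 1 with hg
  have hd : ∀ t : ℝ, 0 < t → HasDerivAt g (-(1/t) + 4 * (((1+t)/2)⁻¹ * (1/2)) - 1) t := by
    intro t ht
    have h1 : HasDerivAt (fun t : ℝ => Real.log t) (1/t) t := by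
      simpa [one_div] using Real.hasDerivAt_log (ne_of_gt ht)
    have h2 : HasDerivAt (fun t : ℝ => (1+t)/2) (1/2) t := by
      simpa using (((hasDerivAt_id t).const_add 1).div_const 2)
    have h3 : HasDerivAt (fun t : ℝ => Real.log ((1+t)/2)) (((1+t)/2)⁻¹ * (1/2)) t := by
      have hne : (1+t)/2 ≠ 0 := by positivity
      exact (Real.hasDerivAt_log hne).comp t h2
    exact (((h1.neg).add (h3.const_mul 4)).sub (hasDerivAt_id t)).add_const 1
  have hanti : AntitoneOn g (Set.Icc u 1) := by
    apply antitoneOn_of_deriv_nonpos (convex_Icc u 1)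
    · exact fun t ht => ((hd t (lt_of_lt_of_le hu0 ht.1)).continuousAt).continuousWithinAt
    · intro t ht
      rw [interior_Icc] at ht
      exact ((hd t (lt_trans hu0 ht.1)).differentiableAt).differentiableWithinAt
    · intro t ht
      rw [interior_Icc] at ht
      have htp : 0 < t := lt_trans hu0 ht.1
      rw [(hd t htp).deriv]
      have h1t : (0:ℝ) < 1 + t := by linarith
      rw [← sub_nonneg]
      have heq : 0 - (-(1/t) + 4 * (((1+t)/2)⁻¹ * (1/2)) - 1) = (1-t)^2 / (t * (1+t)) := by
        field_simp; ring
      rw [heq]; positivity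
  have h1 := hanti (Set.mem_Icc.mpr ⟨le_refl u, hu1⟩) (Set.mem_Icc.mpr ⟨hu1, le_refl 1⟩) hu1
  rw [hg] at h1
  simp only at h1
  norm_num [Real.log_one] at h1
  linarith


lemma key0 (c : ℝ) (hc : 0 < c) (t : ℝ) (ht0 : 0 ≤ t) (htc : t ≤ c) :
    ((Real.exp (-c) + c - 1) / c ^ 2) * t ^ 2 / 4 ≤
      Real.log (1/2 + 1/2 * Real.exp (-t)) + t / 2 := by
  rcases eq_or_lt_of_le ht0 with h0 | h0
  · rw [← h0]; norm_num
  -- Step 1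
  have hu0 : 0 < Real.exp (-t) := Real.exp_pos _
  have hu1 : Real.exp (-t) ≤ 1 := Real.exp_le_one_iff.mpr (by linarith)
  have hC := lemC hu0 hu1
  rw [Real.log_exp] at hC
  have hlogeq : Real.log ((1 + Real.exp (-t))/2) = Real.log (1/2 + 1/2 * Real.exp (-t)) := by
    congr 1; ring
  rw [hlogeq] at hC
  -- hC : exp (-t) - 1 ≤ -(-t) + 4 * log (1/2 + 1/2 * exp (-t))
  have step1 : (Real.exp (-t) + t - 1) / 4 ≤ Real.log (1/2 + 1/2 * Real.exp (-t)) + t/2 := by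
    linarith
  have hB := lemB h0 htc
  have step2 : ((Real.exp (-c) + c - 1) / c ^ 2) * t ^ 2 / 4 ≤ (Real.exp (-t) + t - 1) / 4 := by
    rw [div_mul_eq_mul_div, div_div, div_le_div_iff₀ (by positivity) (by norm_num)]
    nlinarith [hB]
  linarith

lemma keyIneq (c : ℝ) (hc : 0 < c) (t : ℝ) (ht : |t| ≤ c) :
    ((Real.exp (-c) + c - 1) / c ^ 2) * t ^ 2 / 4 ≤
      Real.log (1/2 + 1/2 * Real.exp (-t)) + t / 2 := by
  rcases le_or_gt 0 t with h | h
  · exact key0 c hc t h (by rwa [abs_of_nonneg h] at ht)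
  · have h1 := key0 c hc (-t) (by linarith) (by rwa [abs_of_neg h] at ht)
    have heven : Real.log (1/2 + 1/2 * Real.exp (-(-t))) + (-t)/2
        = Real.log (1/2 + 1/2 * Real.exp (-t)) + t/2 := by
      have hpos : (0:ℝ) < 1/2 + 1/2 * Real.exp (-t) := by positivity
      have h2 : Real.exp t * Real.exp (-t) = 1 := by rw [← Real.exp_add]; simp
      have hfac : 1/2 + 1/2 * Real.exp (-(-t)) = Real.exp t * (1/2 + 1/2 * Real.exp (-t)) := by
        rw [neg_neg]; linear_combination (-(1:ℝ)/2) * h2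
      rw [hfac, Real.log_mul (Real.exp_ne_zero t) (ne_of_gt hpos), Real.log_exp]
      ring
    rw [heven] at h1
    calc ((Real.exp (-c) + c - 1) / c ^ 2) * t ^ 2 / 4
        = ((Real.exp (-c) + c - 1) / c ^ 2) * (-t) ^ 2 / 4 := by ring
      _ ≤ _ := h1


lemma log_bound {η a u v : ℝ} (hη : 0 < η) (ha : 0 ≤ a)
    (hu0 : 0 ≤ u) (hua : u ≤ a) (hv0 : 0 ≤ v) (hva : v ≤ a) :
    ‖-(1/η) * Real.log ((1/2) * Real.exp (-η * u) + (1/2) * Real.exp (-η * v))‖ ≤ a := by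
  have hS1 : (1/2) * Real.exp (-η * u) + (1/2) * Real.exp (-η * v) ≤ 1 := by
    have e1 : Real.exp (-η * u) ≤ 1 := Real.exp_le_one_iff.mpr (by nlinarith)
    have e2 : Real.exp (-η * v) ≤ 1 := Real.exp_le_one_iff.mpr (by nlinarith)
    linarith
  have hS0 : Real.exp (-(η*a)) ≤ (1/2) * Real.exp (-η * u) + (1/2) * Real.exp (-η * v) := by
    have e1 : Real.exp (-(η*a)) ≤ Real.exp (-η * u) := Real.exp_le_exp.mpr (by nlinarith)
    have e2 : Real.exp (-(η*a)) ≤ Real.exp (-η * v) := Real.exp_le_exp.mpr (by nlinarith)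
    linarith
  have hSpos : (0:ℝ) < (1/2) * Real.exp (-η * u) + (1/2) * Real.exp (-η * v) := by positivity
  have hlog1 : Real.log ((1/2) * Real.exp (-η * u) + (1/2) * Real.exp (-η * v)) ≤ 0 :=
    Real.log_nonpos (le_of_lt hSpos) hS1
  have hlog2 : -(η*a) ≤ Real.log ((1/2) * Real.exp (-η * u) + (1/2) * Real.exp (-η * v)) := by
    calc -(η*a) = Real.log (Real.exp (-(η*a))) := (Real.log_exp _).symm
      _ ≤ _ := Real.log_le_log (Real.exp_pos _) hS0
  have habsL : |Real.log ((1/2) * Real.exp (-η * u) + (1/2) * Real.exp (-η * v))| ≤ η * a := by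
    rw [abs_le]; exact ⟨by linarith, by nlinarith⟩
  rw [Real.norm_eq_abs, abs_mul, abs_neg, abs_of_pos (by positivity : (0:ℝ) < 1/η)]
  calc 1/η * |Real.log ((1/2) * Real.exp (-η * u) + (1/2) * Real.exp (-η * v))|
      ≤ 1/η * (η * a) := mul_le_mul_of_nonneg_left habsL (by positivity)
    _ = a := by field_simp

/-- Pseudoprobability convexity implies a Bernstein-type variance bound: if the
η-PPC condition up to ε holds for the two-point mixture `½δ_{f*} + ½δ_f`,
then `Var(ℓ_f - ℓ_{f*}) ≤ (2/(κ(-2ab)·η))·(E[ℓ_f - ℓ_{f*}] + 2ε)`. -/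
theorem stmt11 {Ω : Type*} [MeasurableSpace Ω] (P : Measure Ω) [IsProbabilityMeasure P]
    (Lf Lstar : Ω → ℝ) (a b η ε : ℝ) (ha : 0 < a) (hb : 0 < b)
    (hmf : Measurable Lf) (hms : Measurable Lstar)
    (hrf : ∀ z, Lf z ∈ Set.Icc 0 a) (hrs : ∀ z, Lstar z ∈ Set.Icc 0 a)
    (hη : 0 < η) (hηb : η ≤ b) (hε : 0 ≤ ε)
    (hppc : ∫ z, Lstar z ∂P ≤
      (∫ z, -(1/η) * Real.log ((1/2) * Real.exp (-η * Lstar z)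
        + (1/2) * Real.exp (-η * Lf z)) ∂P) + ε) :
    (∫ z, (Lf z - Lstar z)^2 ∂P) - (∫ z, (Lf z - Lstar z) ∂P)^2 ≤
      (2 / (((Real.exp (-(2*a*b)) + 2*a*b - 1) / (2*a*b)^2) * η)) *
        ((∫ z, (Lf z - Lstar z) ∂P) + 2*ε) := by
  have hc : (0:ℝ) < 2*a*b := by positivity
  set c : ℝ := 2*a*b with hcdef
  set κ : ℝ := (Real.exp (-c) + c - 1) / c^2 with hκdef
  have hκpos : 0 < κ := by
    have := Real.add_one_lt_exp (x := -c) (by intro h; rw [neg_eq_zero] at h; linarith)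
    have h2 : 0 < Real.exp (-c) + c - 1 := by
      have h3 := Real.add_one_lt_exp (x := c) (ne_of_gt hc)
      nlinarith [Real.exp_pos c, Real.exp_pos (-c), Real.exp_neg c,
        mul_pos (Real.exp_pos c) (Real.exp_pos (-c))]
    positivity
  -- pointwise bound
  have hpt : ∀ z, -(1/η) * Real.log ((1/2) * Real.exp (-η * Lstar z)
      + (1/2) * Real.exp (-η * Lf z))
      ≤ Lstar z + (Lf z - Lstar z)/2 - κ * η * (Lf z - Lstar z)^2/4 := by
    intro z
    have hXa : |Lf z - Lstar z| ≤ a := by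
      rw [abs_le]
      constructor <;> [linarith [(hrf z).1, (hrs z).2]; linarith [(hrf z).2, (hrs z).1]]
    have habs : |η * (Lf z - Lstar z)| ≤ c := by
      rw [abs_mul, abs_of_pos hη]
      calc η * |Lf z - Lstar z| ≤ b * a := by
            apply mul_le_mul hηb hXa (abs_nonneg _) (le_of_lt hb)
        _ ≤ c := by rw [hcdef]; nlinarith
    have key := keyIneq c hc (η * (Lf z - Lstar z)) habs
    have hfac : (1/2) * Real.exp (-η * Lstar z) + (1/2) * Real.exp (-η * Lf z)
        = Real.exp (-η * Lstar z) * (1/2 + 1/2 * Real.exp (-(η * (Lf z - Lstar z)))) := by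
      have h2 : Real.exp (-η * Lstar z) * Real.exp (-(η * (Lf z - Lstar z)))
          = Real.exp (-η * Lf z) := by rw [← Real.exp_add]; congr 1; ring
      linear_combination (-(1:ℝ)/2) * h2
    have hpos : (0:ℝ) < 1/2 + 1/2 * Real.exp (-(η * (Lf z - Lstar z))) := by positivity
    rw [hfac, Real.log_mul (Real.exp_ne_zero _) (ne_of_gt hpos), Real.log_exp]
    have hL : κ * (η * (Lf z - Lstar z))^2 / 4 - η * (Lf z - Lstar z) / 2
        ≤ Real.log (1/2 + 1/2 * Real.exp (-(η * (Lf z - Lstar z)))) := by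
      rw [hκdef]; linarith [key]
    set L := Real.log (1/2 + 1/2 * Real.exp (-(η * (Lf z - Lstar z)))) with hLdef
    have hexpand : -(1/η) * (-η * Lstar z + L) = Lstar z - L / η := by
      field_simp; ring
    rw [hexpand]
    rw [sub_le_iff_le_add, ← sub_le_iff_le_add']
    -- Lstar z - (Lstar z + X/2 - κηX²/4) ≤ L/η
    have h4 : κ * η * (Lf z - Lstar z)^2/4 - (Lf z - Lstar z)/2 ≤ L / η := by
      rw [le_div_iff₀ hη]
      nlinarith [hL]
    nlinarith [h4]
  -- integrability
  have hbnd : ∀ z, ‖Lf z - Lstar z‖ ≤ a := by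
    intro z
    rw [Real.norm_eq_abs, abs_le]
    constructor <;> [linarith [(hrf z).1, (hrs z).2]; linarith [(hrf z).2, (hrs z).1]]
  have int_star : Integrable Lstar P := by
    refine (integrable_const a).mono' hms.aestronglyMeasurable (ae_of_all _ fun z => ?_)
    rw [Real.norm_eq_abs, abs_le]
    exact ⟨by linarith [(hrs z).1], (hrs z).2⟩
  have int_X : Integrable (fun z => Lf z - Lstar z) P := by
    refine (integrable_const a).mono' (hmf.sub hms).aestronglyMeasurable
      (ae_of_all _ fun z => hbnd z)
  have int_X2 : Integrable (fun z => (Lf z - Lstar z)^2) P := by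
    refine (integrable_const (a^2)).mono' ((hmf.sub hms).pow_const 2).aestronglyMeasurable
      (ae_of_all _ fun z => ?_)
    rw [Real.norm_eq_abs, abs_pow]
    have := hbnd z
    rw [Real.norm_eq_abs] at this
    nlinarith [abs_nonneg (Lf z - Lstar z)]
  have int_log : Integrable (fun z => -(1/η) * Real.log ((1/2) * Real.exp (-η * Lstar z)
      + (1/2) * Real.exp (-η * Lf z))) P := by
    have hmeas : Measurable (fun z => -(1/η) * Real.log ((1/2) * Real.exp (-η * Lstar z)
        + (1/2) * Real.exp (-η * Lf z))) := by
      apply Measurable.const_mul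
      apply Real.measurable_log.comp
      exact ((Real.measurable_exp.comp (hms.const_mul (-η))).const_mul (1/2)).add
        ((Real.measurable_exp.comp (hmf.const_mul (-η))).const_mul (1/2))
    exact (integrable_const a).mono' hmeas.aestronglyMeasurable (ae_of_all _ fun z =>
      log_bound hη ha.le (hrs z).1 (hrs z).2 (hrf z).1 (hrf z).2)
  -- integrate the pointwise bound
  have int_main : Integrable (fun z => Lstar z + (Lf z - Lstar z)/2
      - κ * η * (Lf z - Lstar z)^2/4) P :=
    (int_star.add (int_X.div_const 2)).sub ((int_X2.const_mul (κ * η)).div_const 4)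
  have hIle : (∫ z, -(1/η) * Real.log ((1/2) * Real.exp (-η * Lstar z)
      + (1/2) * Real.exp (-η * Lf z)) ∂P)
      ≤ ∫ z, (Lstar z + (Lf z - Lstar z)/2 - κ * η * (Lf z - Lstar z)^2/4) ∂P :=
    integral_mono int_log int_main hpt
  have hsplit : ∫ z, (Lstar z + (Lf z - Lstar z)/2 - κ * η * (Lf z - Lstar z)^2/4) ∂P
      = (∫ z, Lstar z ∂P) + (∫ z, (Lf z - Lstar z) ∂P)/2
        - κ * η * (∫ z, (Lf z - Lstar z)^2 ∂P)/4 := by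
    have i0 : Integrable (fun z => (Lf z - Lstar z)/2) P := int_X.div_const 2
    have i1 : Integrable (fun z => Lstar z + (Lf z - Lstar z)/2) P := int_star.add i0
    have i2 : Integrable (fun z => κ * η * (Lf z - Lstar z)^2/4) P :=
      (int_X2.const_mul (κ * η)).div_const 4
    rw [integral_sub i1 i2, integral_add int_star i0, integral_div, integral_div,
      integral_const_mul]
  have hmain : κ * η * (∫ z, (Lf z - Lstar z)^2 ∂P) / 4
      ≤ (∫ z, (Lf z - Lstar z) ∂P)/2 + ε := by
    have := le_trans hppc (by linarith [hIle] :
      (∫ z, -(1/η) * Real.log ((1/2) * Real.exp (-η * Lstar z)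
        + (1/2) * Real.exp (-η * Lf z)) ∂P) + ε
      ≤ ∫ z, (Lstar z + (Lf z - Lstar z)/2 - κ * η * (Lf z - Lstar z)^2/4) ∂P + ε)
    rw [hsplit] at this
    linarith
  have hκη : 0 < κ * η := mul_pos hκpos hη
  have hfin : (∫ z, (Lf z - Lstar z)^2 ∂P) ≤ 2 / (κ * η) * ((∫ z, (Lf z - Lstar z) ∂P) + 2*ε) := by
    rw [div_mul_eq_mul_div, le_div_iff₀ hκη]
    nlinarith [hmain]
  have := sq_nonneg (∫ z, (Lf z - Lstar z) ∂P)
  linarith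
end

section
/- Let W be a random variable with values in [-1,1], mean E[W] = a/n > 0, and log E[e^{-η*W}] = 0 for some η* > 0, with a/n < (cosh(η*)-1)/sinh(η*). Then log E[e^{-(η*/2)W}] ≤ -0.21·min(η*,1)·a/n. -/
open MeasureTheory Real Set

noncomputable def gA : ℝ → ℝ := fun t => (1 - Real.exp t)^2 - (21/50)*((Real.exp t)^2 - 1 - 2*t)

lemma gA_deriv (t : ℝ) : HasDerivAt gA ((29/25)*(Real.exp t)^2 - 2*Real.exp t + 21/25) t := by
  have h1 := Real.hasDerivAt_exp t
  have := (((hasDerivAt_const t (1:ℝ)).sub h1).pow 2).sub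
    ((((h1.pow 2).sub_const 1).sub ((hasDerivAt_id t).const_mul 2)).const_mul (21/50))
  exact this.congr_deriv (by norm_num; ring)

lemma gA_nonneg {t : ℝ} (ht : 0 ≤ t) : 0 ≤ gA t := by
  have hmono : MonotoneOn gA (Ici (0:ℝ)) := by
    apply monotoneOn_of_deriv_nonneg (convex_Ici 0)
    · exact fun x _ => (gA_deriv x).continuousAt.continuousWithinAt
    · exact fun x _ => (gA_deriv x).differentiableAt.differentiableWithinAt
    · intro x hx
      rw [(gA_deriv x).deriv]
      rw [interior_Ici] at hx
      have h1 : (1:ℝ) ≤ Real.exp x := Real.one_le_exp (le_of_lt hx)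
      nlinarith [h1]
  have h0 : gA 0 = 0 := by simp [gA]
  have := hmono (self_mem_Ici) (mem_Ici.2 ht) ht
  simpa [h0] using this

lemma nexp_deriv (s : ℝ) : HasDerivAt (fun s : ℝ => Real.exp (-s)) (-Real.exp (-s)) s := by
  simpa using (hasDerivAt_neg s).exp

noncomputable def gJ : ℝ → ℝ := fun s => (1 - Real.exp (-s))^2 - (21/50)*((Real.exp (-s))^2 - 1 + 2*s)

lemma gJ_deriv (s : ℝ) : HasDerivAt gJ (2*Real.exp (-s) - (29/25)*(Real.exp (-s))^2 - 21/25) s := by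
  have h1 := nexp_deriv s
  have := (((hasDerivAt_const s (1:ℝ)).sub h1).pow 2).sub
    ((((h1.pow 2).add_const (-1)).add ((hasDerivAt_id s).const_mul 2)).const_mul (21/50))
  exact this.congr_deriv (by norm_num; ring)

lemma expneg1_lb : (0.3678794411 : ℝ) < Real.exp (-1) := by
  rw [Real.exp_neg, inv_eq_one_div, lt_div_iff₀ (Real.exp_pos 1)]
  nlinarith [Real.exp_one_lt_d9]

lemma expneghalf_ub : Real.exp (-(1/2 : ℝ)) < 0.6065307 := by
  have h2 : Real.exp (-(1/2 : ℝ)) ^ 2 = Real.exp (-1) := by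
    rw [← Real.exp_nat_mul]; norm_num
  have hub : Real.exp (-1 : ℝ) < (0.3678794900 : ℝ) := by
    rw [Real.exp_neg, inv_eq_one_div, div_lt_iff₀ (Real.exp_pos 1)]
    nlinarith [Real.exp_one_gt_d9]
  nlinarith [Real.exp_pos (-(1/2 : ℝ))]

lemma gJ_half : 0 ≤ gJ (1/2) := by
  unfold gJ
  have h2 : Real.exp (-(1/2:ℝ)) ^ 2 = Real.exp (-1) := by
    rw [← Real.exp_nat_mul]; norm_num
  have h3 : Real.exp (-(1/2:ℝ)) < 0.6065307 := expneghalf_ub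
  have h4 := expneg1_lb
  have h5 : (0:ℝ) < Real.exp (-(1/2:ℝ)) := Real.exp_pos _
  nlinarith

lemma gJ_nonneg {s : ℝ} (h0 : 0 ≤ s) (h1 : s ≤ 1/2) : 0 ≤ gJ s := by
  set a := Real.log (29/21) with ha
  have ha0 : 0 ≤ a := Real.log_nonneg (by norm_num)
  have hea : Real.exp (-a) = 21/29 := by
    rw [Real.exp_neg, Real.exp_log (by norm_num : (0:ℝ) < 29/21)]; norm_num
  have hahalf : a ≤ 1/2 := by
    have h := Real.exp_one_gt_d9
    have : (29/21:ℝ) ≤ Real.exp (1/2) := by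
      have hsq : Real.exp ((1:ℝ)/2) ^ 2 = Real.exp 1 := by
        rw [← Real.exp_nat_mul]; norm_num
      nlinarith [Real.exp_pos ((1:ℝ)/2)]
    calc a ≤ Real.log (Real.exp (1/2)) := by
          apply Real.log_le_log (by norm_num) this
      _ = 1/2 := Real.log_exp _
  rcases le_total s a with hsa | has
  · -- monotone on [0, a]
    have hmono : MonotoneOn gJ (Icc (0:ℝ) a) := by
      apply monotoneOn_of_deriv_nonneg (convex_Icc 0 a)
      · exact fun x _ => (gJ_deriv x).continuousAt.continuousWithinAt
      · exact fun x _ => (gJ_deriv x).differentiableAt.differentiableWithinAt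
      · intro x hx
        rw [(gJ_deriv x).deriv]
        rw [interior_Icc] at hx
        have hu1 : Real.exp (-x) ≤ 1 := Real.exp_le_one_iff.2 (by linarith [hx.1])
        have hu2 : (21/29:ℝ) ≤ Real.exp (-x) := by
          rw [← hea]; exact Real.exp_le_exp.2 (by linarith [hx.2])
        nlinarith
    have h00 : gJ 0 = 0 := by simp [gJ]
    have := hmono (by constructor <;> norm_num [ha0]) ⟨h0, hsa⟩ h0
    simpa [h00] using this
  · -- antitone on [a, 1/2]
    have hanti : AntitoneOn gJ (Icc a (1/2:ℝ)) := by
      apply antitoneOn_of_deriv_nonpos (convex_Icc a (1/2))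
      · exact fun x _ => (gJ_deriv x).continuousAt.continuousWithinAt
      · exact fun x _ => (gJ_deriv x).differentiableAt.differentiableWithinAt
      · intro x hx
        rw [(gJ_deriv x).deriv]
        rw [interior_Icc] at hx
        have hu0 : (0:ℝ) < Real.exp (-x) := Real.exp_pos _
        have hu2 : Real.exp (-x) ≤ 21/29 := by
          rw [← hea]; exact Real.exp_le_exp.2 (by linarith [hx.1])
        nlinarith
    have := hanti ⟨has, h1⟩ ⟨hahalf, le_refl _⟩ h1
    calc (0:ℝ) ≤ gJ (1/2) := gJ_half
      _ ≤ gJ s := this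

noncomputable def gK : ℝ → ℝ := fun s => s*(1 - Real.exp (-s))^2 - (21/100)*((Real.exp (-s))^2 - 1 + 2*s)

lemma gK_deriv (s : ℝ) : HasDerivAt gK
    ((1 - Real.exp (-s))^2 + 2*s*Real.exp (-s)*(1 - Real.exp (-s)) + (21/50)*(Real.exp (-s))^2 - 21/50) s := by
  have h1 := nexp_deriv s
  have := ((hasDerivAt_id s).mul (((hasDerivAt_const s (1:ℝ)).sub h1).pow 2)).sub
    ((((h1.pow 2).add_const (-1)).add ((hasDerivAt_id s).const_mul 2)).const_mul (21/100))
  exact this.congr_deriv (by norm_num; ring)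

lemma gK_nonneg {s : ℝ} (h : 1/2 ≤ s) : 0 ≤ gK s := by
  have hmono : MonotoneOn gK (Ici (1/2:ℝ)) := by
    apply monotoneOn_of_deriv_nonneg (convex_Ici _)
    · exact fun x _ => (gK_deriv x).continuousAt.continuousWithinAt
    · exact fun x _ => (gK_deriv x).differentiableAt.differentiableWithinAt
    · intro x hx
      rw [(gK_deriv x).deriv]
      rw [interior_Ici] at hx
      have hx' : (1/2:ℝ) < x := hx
      set u := Real.exp (-x) with hu
      have hu0 : (0:ℝ) < u := Real.exp_pos _
      have hu1 : u ≤ 1 := Real.exp_le_one_iff.2 (by linarith)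
      have hfac : (0:ℝ) ≤ 29/50 + u*(2*x - 71/50) := by nlinarith
      have key : (1 - u)^2 + 2*x*u*(1 - u) + (21/50)*u^2 - 21/50
          = (1 - u) * (29/50 + u*(2*x - 71/50)) := by ring
      rw [key]
      exact mul_nonneg (by linarith) hfac
  have hhalf : 0 ≤ gK (1/2) := by
    unfold gK
    have h3 : Real.exp (-(1/2:ℝ)) < 0.6065307 := expneghalf_ub
    have h5 : (0:ℝ) < Real.exp (-(1/2:ℝ)) := Real.exp_pos _
    nlinarith
  have := hmono (self_mem_Ici) (mem_Ici.2 h) h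
  linarith

lemma key_ineq{θ s : ℝ} (hθ0 : 0 < θ) (hθ : θ ≤ 21/100) (hs : θ * s ≤ 21/200) :
    Real.exp (-s) ≤ (1/2 - θ)*(Real.exp (-s))^2 + 1/2 + θ - 2*θ*s := by
  set u := Real.exp (-s) with hu
  have hu0 : 0 < u := Real.exp_pos _
  have hD : 0 ≤ u^2 - 1 + 2*s := by
    have h1 : -2*s + 1 ≤ Real.exp (-2*s) := Real.add_one_le_exp (-2*s)
    have h2 : u^2 = Real.exp (-2*s) := by
      rw [hu, ← Real.exp_nat_mul]; ring_nf
    nlinarith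
  have key : θ * (u^2 - 1 + 2*s) ≤ (1 - u)^2 / 2 := by
    rcases le_total s 0 with hsneg | hspos
    · have hA := gA_nonneg (neg_nonneg.2 hsneg)
      have : gA (-s) = (1 - u)^2 - (21/50)*(u^2 - 1 + 2*s) := by
        simp only [gA, hu]; ring
      nlinarith [mul_le_mul_of_nonneg_right hθ hD]
    · rcases le_total s (1/2) with hhalf | hbig
      · have hJ := gJ_nonneg hspos hhalf
        simp only [gJ, ← hu] at hJ
        nlinarith [mul_le_mul_of_nonneg_right hθ hD]
      · have hK := gK_nonneg hbig
        simp only [gK, ← hu] at hK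
        have hs2 : (0:ℝ) < s := by linarith
        -- θ*D*s ≤ (21/200)*D ≤ s*(1-u)^2/2
        have h1 : θ * (u^2 - 1 + 2*s) * s ≤ (21/200) * (u^2 - 1 + 2*s) := by
          have := mul_le_mul_of_nonneg_right hs hD
          nlinarith
        nlinarith
  nlinarith

/-- CGF control from the central condition: if `W ∈ [-1,1]`, `E[W] = a/n > 0`,
`log E[e^{-η*W}] = 0` and `a/n < (cosh η* - 1)/sinh η*`, then
`log E[e^{-(η*/2)W}] ≤ -0.21·min(η*,1)·a/n`. -/
theorem stmt16 {Ω : Type*} [MeasurableSpace Ω] (P : Measure Ω) [IsProbabilityMeasure P]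
    (W : Ω → ℝ) (hW : Measurable W) (hrange : ∀ ω, W ω ∈ Set.Icc (-1:ℝ) 1)
    (a n ηs : ℝ) (ha : 0 < a) (hn : 0 < n) (hηs : 0 < ηs)
    (hmean : ∫ ω, W ω ∂P = a/n)
    (hcgf : Real.log (∫ ω, Real.exp (-ηs * W ω) ∂P) = 0)
    (hint : a/n < (Real.cosh ηs - 1) / Real.sinh ηs) :
    Real.log (∫ ω, Real.exp (-(ηs/2) * W ω) ∂P) ≤ -0.21 * min ηs 1 * (a/n) := by
  have hW1 : ∀ ω, W ω ≤ 1 := fun ω => (hrange ω).2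
  have hWm1 : ∀ ω, -1 ≤ W ω := fun ω => (hrange ω).1
  -- integrability
  have hWi : Integrable W P :=
    ⟨hW.aestronglyMeasurable, HasFiniteIntegral.of_bounded (C := 1)
      (ae_of_all _ fun ω => abs_le.2 ⟨hWm1 ω, hW1 ω⟩)⟩
  have hexpint : ∀ b : ℝ, 0 ≤ b → Integrable (fun ω => Real.exp (-b * W ω)) P := by
    intro b hb
    refine ⟨(Real.measurable_exp.comp (hW.const_mul (-b))).aestronglyMeasurable,
      HasFiniteIntegral.of_bounded (C := Real.exp b) (ae_of_all _ fun ω => ?_)⟩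
    rw [Real.norm_eq_abs, abs_of_pos (Real.exp_pos _)]
    apply Real.exp_le_exp.2
    nlinarith [hWm1 ω]
  have hexp1 : Integrable (fun ω => Real.exp (-ηs * W ω)) P := hexpint ηs hηs.le
  have hexp2 : Integrable (fun ω => Real.exp (-(ηs/2) * W ω)) P := hexpint (ηs/2) (by linarith)
  -- lower bounds on the integrals
  have hIlb : ∀ b : ℝ, 0 ≤ b → Real.exp (-b) ≤ ∫ ω, Real.exp (-b * W ω) ∂P := by
    intro b hb
    have : ∫ (_ : Ω), Real.exp (-b) ∂P = Real.exp (-b) := by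
      simp [integral_const]
    rw [← this]
    apply integral_mono (integrable_const _) (hexpint b hb)
    intro ω
    apply Real.exp_le_exp.2
    nlinarith [hW1 ω]
  have hI1pos : 0 < ∫ ω, Real.exp (-ηs * W ω) ∂P :=
    lt_of_lt_of_le (Real.exp_pos _) (hIlb ηs hηs.le)
  have hI2pos : 0 < ∫ ω, Real.exp (-(ηs/2) * W ω) ∂P :=
    lt_of_lt_of_le (Real.exp_pos _) (hIlb (ηs/2) (by linarith))
  have hI1 : ∫ ω, Real.exp (-ηs * W ω) ∂P = 1 := by
    have := Real.exp_log hI1pos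
    rw [hcgf, Real.exp_zero] at this
    linarith
  -- parameters
  set c : ℝ := (21/100) * min ηs 1 with hc
  have hmin0 : 0 < min ηs 1 := lt_min hηs one_pos
  have hmin1 : min ηs 1 ≤ 1 := min_le_right _ _
  have hminηs : min ηs 1 ≤ ηs := min_le_left _ _
  set θ : ℝ := c / ηs with hθdef
  have hθ0 : 0 < θ := div_pos (by positivity) hηs
  have hθub : θ ≤ 21/100 := by
    rw [hθdef, div_le_iff₀ hηs, hc]
    nlinarith
  -- pointwise inequality
  have hpt : ∀ ω, Real.exp (-(ηs/2) * W ω) ≤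
      (1/2 - θ) * Real.exp (-ηs * W ω) + (1/2 + θ) - c * W ω := by
    intro ω
    have hs : θ * (ηs * W ω / 2) ≤ 21/200 := by
      rw [hθdef, hc]
      have hη : θ * ηs = c := by rw [hθdef]; field_simp
      have : (21/100) * min ηs 1 / ηs * (ηs * W ω / 2) = (21/200) * (min ηs 1 * W ω) := by
        field_simp; ring
      rw [this]
      nlinarith [hW1 ω, hWm1 ω]
    have := key_ineq hθ0 hθub hs
    have e1 : Real.exp (-(ηs * W ω / 2)) = Real.exp (-(ηs/2) * W ω) := by ring_nf
    have e2 : (Real.exp (-(ηs/2) * W ω))^2 = Real.exp (-ηs * W ω) := by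
      rw [← Real.exp_nat_mul]; ring_nf
    rw [e1, e2] at this
    have e3 : 2 * θ * (ηs * W ω / 2) = c * W ω := by
      rw [hθdef]; field_simp
    linarith [this, e3.ge, e3.le]
  -- integrate
  have hRHSint : Integrable (fun ω => (1/2 - θ) * Real.exp (-ηs * W ω) + (1/2 + θ) - c * W ω) P :=
    (((hexp1.const_mul _).add (integrable_const _)).sub (hWi.const_mul _))
  have hInt : ∫ ω, Real.exp (-(ηs/2) * W ω) ∂P ≤ 1 - c * (a/n) := by
    have h1 : ∫ ω, Real.exp (-(ηs/2) * W ω) ∂P ≤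
        ∫ ω, ((1/2 - θ) * Real.exp (-ηs * W ω) + (1/2 + θ) - c * W ω) ∂P :=
      integral_mono hexp2 hRHSint hpt
    have h2 : ∫ ω, ((1/2 - θ) * Real.exp (-ηs * W ω) + (1/2 + θ) - c * W ω) ∂P
        = (1/2 - θ) * (∫ ω, Real.exp (-ηs * W ω) ∂P) + (1/2 + θ) - c * (a/n) := by
      have hfint : Integrable (fun ω => (1/2 - θ) * Real.exp (-ηs * W ω) + (1/2 + θ)) P :=
        (hexp1.const_mul _).add (integrable_const _)
      have hgint : Integrable (fun ω => c * W ω) P := hWi.const_mul _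
      have hcint : Integrable (fun ω => (1/2 - θ) * Real.exp (-ηs * W ω)) P :=
        hexp1.const_mul _
      rw [integral_sub hfint hgint, integral_add hcint (integrable_const _),
        integral_const_mul, integral_const_mul, hmean]
      simp
    rw [h2, hI1] at h1
    linarith
  -- conclude
  have hm1 : a/n ≤ 1 := by
    rw [← hmean]
    have : ∫ (_ : Ω), (1:ℝ) ∂P = 1 := by simp
    rw [← this]
    exact integral_mono hWi (integrable_const _) hW1
  have hm0 : 0 < a/n := div_pos ha hn
  have hcm : c * (a/n) < 1 := by nlinarith
  have h1cm : 0 < 1 - c * (a/n) := by linarith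
  calc Real.log (∫ ω, Real.exp (-(ηs/2) * W ω) ∂P)
      ≤ Real.log (1 - c * (a/n)) := Real.log_le_log hI2pos hInt
    _ ≤ (1 - c * (a/n)) - 1 := Real.log_le_sub_one_of_pos h1cm
    _ = -(c * (a/n)) := by ring
    _ = -0.21 * min ηs 1 * (a/n) := by rw [hc]; norm_num
end
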